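/- Fuchs–van de Graaf and Bures–trace relations: for any two density matrices ρ, σ, with fidelity F(ρ,σ) = ‖√ρ √σ‖₁ and trace distance Δ(ρ,σ) = ‖ρ−σ‖₁/2 and Bures metric Δ_B(ρ,σ) = √(1 − F(ρ,σ)), it holds that 1 − F(ρ,σ) ≤ Δ(ρ,σ) ≤ √(1 − F(ρ,σ)²) and Δ_B(ρ,σ)² ≤ Δ(ρ,σ) ≤ √2 · Δ_B(ρ,σ). -/

import Mathlib

open Matrix
open scoped ComplexOrder

/-- The positive semidefinite square root of a positive semidefinite matrix
(the definition `Matrix.PosSemidef.sqrt` of the older Mathlib, since removed). -/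
noncomputable def Matrix.PosSemidef.sqrt {n 𝕜 : Type*} [Fintype n] [RCLike 𝕜] [DecidableEq n]
    {A : Matrix n n 𝕜} (hA : A.PosSemidef) : Matrix n n 𝕜 :=
  hA.1.eigenvectorUnitary.1 * diagonal ((↑) ∘ (Real.sqrt ∘ hA.1.eigenvalues)) *
  (star hA.1.eigenvectorUnitary : Matrix n n 𝕜)

/-- Trace norm (Schatten 1-norm): `‖A‖₁ = Tr √(Aᴴ A)`. -/
noncomputable def traceNorm {n : Type*} [Fintype n] [DecidableEq n]
    (A : Matrix n n ℂ) : ℝ :=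
  ((Matrix.posSemidef_conjTranspose_mul_self A).sqrt).trace.re

namespace Matrix.PosSemidef

lemma sqrt_eq_cfc' {n : Type*} [Fintype n] [DecidableEq n] {A : Matrix n n ℂ}
    (hA : A.PosSemidef) : hA.sqrt = cfc Real.sqrt A := by
  rw [hA.1.cfc_eq]
  simp only [Matrix.PosSemidef.sqrt, IsHermitian.cfc, Unitary.conjStarAlgAut_apply]

lemma posSemidef_sqrt {n : Type*} [Fintype n] [DecidableEq n] {A : Matrix n n ℂ}
    (hA : A.PosSemidef) : hA.sqrt.PosSemidef := by
  have hdiag : (diagonal ((↑) ∘ (Real.sqrt ∘ hA.1.eigenvalues)) : Matrix n n ℂ).PosSemidef := by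
    refine posSemidef_diagonal_iff.mpr fun i => ?_
    simp only [Function.comp_apply]
    exact Complex.zero_le_real.mpr (Real.sqrt_nonneg _)
  have := hdiag.mul_mul_conjTranspose_same (hA.1.eigenvectorUnitary : Matrix n n ℂ)
  rwa [← Matrix.star_eq_conjTranspose] at this

lemma sqrt_mul_self {n : Type*} [Fintype n] [DecidableEq n] {A : Matrix n n ℂ}
    (hA : A.PosSemidef) : hA.sqrt * hA.sqrt = A := by
  have hU := Unitary.coe_star_mul_self hA.1.eigenvectorUnitary
  conv_rhs => rw [hA.1.spectral_theorem, Unitary.conjStarAlgAut_apply]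
  simp only [Matrix.PosSemidef.sqrt, Matrix.mul_assoc]
  rw [← Matrix.mul_assoc (star _) _ _, hU, Matrix.one_mul,
    ← Matrix.mul_assoc (diagonal _) (diagonal _), diagonal_mul_diagonal]
  congr 3
  funext i
  show ((Real.sqrt (hA.1.eigenvalues i) : ℝ) : ℂ) * ((Real.sqrt (hA.1.eigenvalues i) : ℝ) : ℂ)
    = ((hA.1.eigenvalues i : ℝ) : ℂ)
  rw [← Complex.ofReal_mul, Real.mul_self_sqrt (hA.eigenvalues_nonneg i)]

lemma eq_sqrt_of_sq_eq {n : Type*} [Fintype n] [DecidableEq n] {A B : Matrix n n ℂ}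
    (hB : B.PosSemidef) (hA : A.PosSemidef) (h : B ^ 2 = A) : B = hA.sqrt := by
  rw [sqrt_eq_cfc', ← h]
  have hsa : IsSelfAdjoint B := hB.1
  have hspec : ∀ x ∈ spectrum ℝ B, 0 ≤ x := by
    intro x hx
    rw [hB.1.spectrum_real_eq_range_eigenvalues] at hx
    obtain ⟨i, rfl⟩ := hx
    exact hB.eigenvalues_nonneg i
  calc B = cfc (fun x : ℝ => x) B := (cfc_id' ℝ B hsa).symm
    _ = cfc (fun x : ℝ => Real.sqrt (x ^ 2)) B :=
        cfc_congr fun x hx => (Real.sqrt_sq (hspec x hx)).symm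
    _ = cfc Real.sqrt (B ^ 2) :=
        cfc_comp_pow Real.sqrt 2 B Real.continuous_sqrt.continuousOn hsa

end Matrix.PosSemidef

namespace FvdG
set_option linter.unusedSectionVars false


variable {n : Type*} [Fintype n] [DecidableEq n]

/-- Cauchy–Schwarz for the complex dot product. -/
lemma abs_dotProduct_le (x y : n → ℂ) :
    ‖star x ⬝ᵥ y‖ ≤ Real.sqrt (star x ⬝ᵥ x).re * Real.sqrt (star y ⬝ᵥ y).re := by
  have h := norm_inner_le_norm (𝕜 := ℂ) ((WithLp.equiv 2 (n → ℂ)).symm x)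
    ((WithLp.equiv 2 (n → ℂ)).symm y)
  have hin : ∀ a b : n → ℂ, inner ℂ ((WithLp.equiv 2 (n → ℂ)).symm a)
      ((WithLp.equiv 2 (n → ℂ)).symm b) = star a ⬝ᵥ b := fun a b => by
    rw [dotProduct_comm]; rfl
  rw [hin] at h
  have hx : ‖(WithLp.equiv 2 (n → ℂ)).symm x‖ = Real.sqrt (star x ⬝ᵥ x).re := by
    have h2 : ((starRingEnd ℂ) ∘ x) ⬝ᵥ x = star x ⬝ᵥ x := rfl
    rw [← Real.sqrt_sq (norm_nonneg _)]
    congr 1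
    rw [← inner_self_eq_norm_sq (𝕜 := ℂ), hin]
    rfl
  have hy : ‖(WithLp.equiv 2 (n → ℂ)).symm y‖ = Real.sqrt (star y ⬝ᵥ y).re := by
    rw [← Real.sqrt_sq (norm_nonneg _)]
    congr 1
    rw [← inner_self_eq_norm_sq (𝕜 := ℂ), hin]
    rfl
  calc ‖star x ⬝ᵥ y‖ ≤ _ := h
  _ = _ := by rw [hx, hy]



set_option linter.unusedSectionVars false

variable {n : Type*} [Fintype n] [DecidableEq n]

lemma nsq_mulVec (M : Matrix n n ℂ) (x : n → ℂ) :
    star (M *ᵥ x) ⬝ᵥ (M *ᵥ x) = star x ⬝ᵥ ((Mᴴ * M) *ᵥ x) := by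
  rw [star_mulVec, dotProduct_mulVec, vecMul_vecMul, ← dotProduct_mulVec]

lemma conj_diag_apply (V X : Matrix n n ℂ) (i : n) :
    (Vᴴ * X * V) i i = star (fun j => V j i) ⬝ᵥ (X *ᵥ fun j => V j i) := by
  simp only [mul_apply, conjTranspose_apply, dotProduct, mulVec, Pi.star_apply]
  simp only [Finset.sum_mul, Finset.mul_sum]
  rw [Finset.sum_comm]
  refine Finset.sum_congr rfl fun k _ => Finset.sum_congr rfl fun j _ => by ring

lemma trace_conj_unitary (V : Matrix.unitaryGroup n ℂ) (X : Matrix n n ℂ) :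
    ((star (V : Matrix n n ℂ)) * X * (V : Matrix n n ℂ)).trace = X.trace := by
  rw [trace_mul_comm, ← Matrix.mul_assoc, (Matrix.mem_unitaryGroup_iff).mp V.2, Matrix.one_mul]

lemma sum_dot_eq_trace (V : Matrix.unitaryGroup n ℂ) (X : Matrix n n ℂ) :
    ∑ i, star (fun j => (V : Matrix n n ℂ) j i) ⬝ᵥ (X *ᵥ fun j => (V : Matrix n n ℂ) j i)
      = X.trace := by
  rw [← trace_conj_unitary V X]
  rw [Matrix.trace]
  simp only [Matrix.star_eq_conjTranspose, Matrix.diag]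
  exact Finset.sum_congr rfl fun i _ => (conj_diag_apply _ X i).symm

/-- diagonal entries of a PSD matrix are nonneg. -/
lemma psd_diag_nonneg {A : Matrix n n ℂ} (hA : A.PosSemidef) (i : n) :
    0 ≤ A i i := by
  exact hA.diag_nonneg

lemma trace_re_nonneg {A : Matrix n n ℂ} (hA : A.PosSemidef) : 0 ≤ A.trace.re := by
  rw [Matrix.trace]
  simp only [Complex.re_sum]
  exact Finset.sum_nonneg fun i _ => by
    have := psd_diag_nonneg hA i
    rw [Complex.le_def] at this
    simpa using this.1

/-- trace of a product of PSD matrices has nonnegative real part. -/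
lemma trace_mul_re_nonneg {A B : Matrix n n ℂ} (hA : A.PosSemidef) (hB : B.PosSemidef) :
    0 ≤ (A * B).trace.re := by
  have hs := hB.posSemidef_sqrt
  have hBs : B = hB.sqrt * hB.sqrt := hB.sqrt_mul_self.symm
  have h1 : A * B = A * hB.sqrt * hB.sqrt := by rw [Matrix.mul_assoc, ← hBs]
  have h2 : (A * hB.sqrt * hB.sqrt).trace = (hB.sqrt * A * hB.sqrt).trace := by
    rw [Matrix.trace_mul_comm, ← Matrix.mul_assoc]
  have h3 : (hB.sqrt * A * hB.sqrt).PosSemidef := by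
    have := hA.conjTranspose_mul_mul_same hB.sqrt
    rwa [hs.isHermitian.eq] at this
  rw [h1, h2]
  exact trace_re_nonneg h3



set_option linter.unusedSectionVars false
set_option maxHeartbeats 800000

variable {n : Type*} [Fintype n] [DecidableEq n]

lemma unitary_nsq (U : Matrix.unitaryGroup n ℂ) (x : n → ℂ) :
    star ((U : Matrix n n ℂ) *ᵥ x) ⬝ᵥ ((U : Matrix n n ℂ) *ᵥ x) = star x ⬝ᵥ x := by
  rw [nsq_mulVec, ← Matrix.star_eq_conjTranspose, Unitary.coe_star_mul_self, one_mulVec]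

lemma trace_unitary_conj (V : Matrix.unitaryGroup n ℂ) (f : n → ℂ) :
    ((V : Matrix n n ℂ) * diagonal f * star (V : Matrix n n ℂ)).trace = ∑ i, f i := by
  rw [trace_mul_comm, ← Matrix.mul_assoc, Unitary.coe_star_mul_self, Matrix.one_mul,
    trace_diagonal]

lemma traceNorm_eq_sum (M : Matrix n n ℂ) :
    traceNorm M
      = ∑ i, Real.sqrt ((Matrix.posSemidef_conjTranspose_mul_self M).1.eigenvalues i) := by
  show ((Matrix.posSemidef_conjTranspose_mul_self M).sqrt).trace.re = _
  rw [Matrix.PosSemidef.sqrt, trace_unitary_conj]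
  rw [Complex.re_sum]
  exact Finset.sum_congr rfl fun i _ => by simp

lemma traceNorm_nonneg (M : Matrix n n ℂ) : 0 ≤ traceNorm M := by
  rw [traceNorm_eq_sum]
  exact Finset.sum_nonneg fun i _ => Real.sqrt_nonneg _

lemma eig_dot {H : Matrix n n ℂ} (hH : H.IsHermitian) (i j : n) :
    star ⇑(hH.eigenvectorBasis i) ⬝ᵥ ⇑(hH.eigenvectorBasis j) = if i = j then 1 else 0 := by
  have h := hH.eigenvectorBasis.orthonormal
  rw [orthonormal_iff_ite] at h
  have h2 := h i j
  rw [EuclideanSpace.inner_eq_star_dotProduct, dotProduct_comm] at h2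
  exact h2

lemma eig_dot_mulVec {H : Matrix n n ℂ} (hH : H.IsHermitian) (i : n) :
    star ⇑(hH.eigenvectorBasis i) ⬝ᵥ (H *ᵥ ⇑(hH.eigenvectorBasis i))
      = (hH.eigenvalues i : ℂ) := by
  rw [hH.mulVec_eigenvectorBasis, dotProduct_smul, eig_dot hH i i, if_pos rfl]
  simp [Complex.real_smul]

lemma re_trace_unitary_mul_le (U : Matrix.unitaryGroup n ℂ) (M : Matrix n n ℂ) :
    (((U : Matrix n n ℂ) * M).trace).re ≤ traceNorm M := by
  have h := Matrix.posSemidef_conjTranspose_mul_self M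
  set V := h.1.eigenvectorUnitary with hV
  have ht := (sum_dot_eq_trace V ((U : Matrix n n ℂ) * M)).symm
  rw [ht, Complex.re_sum, traceNorm_eq_sum]
  apply Finset.sum_le_sum
  intro i _
  have hv : (fun j => (V : Matrix n n ℂ) j i) = ⇑(h.1.eigenvectorBasis i) :=
    funext fun j => h.1.eigenvectorUnitary_apply j i
  rw [hv]
  set v := ⇑(h.1.eigenvectorBasis i) with hv'
  have e1 : (star v ⬝ᵥ v) = 1 := by rw [hv', eig_dot h.1 i i, if_pos rfl]
  have e2 : star (((U : Matrix n n ℂ) * M) *ᵥ v) ⬝ᵥ (((U : Matrix n n ℂ) * M) *ᵥ v)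
      = (h.1.eigenvalues i : ℂ) := by
    rw [← mulVec_mulVec, unitary_nsq, nsq_mulVec, hv', eig_dot_mulVec h.1 i]
  calc (star v ⬝ᵥ (((U : Matrix n n ℂ) * M) *ᵥ v)).re
      ≤ ‖star v ⬝ᵥ (((U : Matrix n n ℂ) * M) *ᵥ v)‖ := by
        exact Complex.re_le_norm _
    _ ≤ Real.sqrt (star v ⬝ᵥ v).re
        * Real.sqrt (star (((U : Matrix n n ℂ) * M) *ᵥ v) ⬝ᵥ (((U : Matrix n n ℂ) * M) *ᵥ v)).re
        := abs_dotProduct_le _ _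
    _ = Real.sqrt (h.1.eigenvalues i) := by
        rw [e1, e2]
        simp

lemma dot_mulVec_mulVec (A B : Matrix n n ℂ) (x y : n → ℂ) :
    star (A *ᵥ x) ⬝ᵥ (B *ᵥ y) = star x ⬝ᵥ ((Aᴴ * B) *ᵥ y) := by
  rw [star_mulVec, dotProduct_mulVec, vecMul_vecMul, ← dotProduct_mulVec]

lemma nsq_nonneg (x : n → ℂ) : 0 ≤ (star x ⬝ᵥ x).re := by
  have := dotProduct_star_self_nonneg x
  rw [Complex.le_def] at this
  simpa using this.1

/-- Sum of diagonal values of a PSD matrix over a sub-orthonormal family is at most the trace. -/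
lemma sum_dot_le_trace {G : Matrix n n ℂ} (hG : G.PosSemidef) (w : n → n → ℂ) (d : n → ℂ)
    (hw0 : ∀ i, d i = 0 → w i = 0)
    (hww : ∀ i j, star (w i) ⬝ᵥ w j = if i = j then d i else 0)
    (hd : ∀ i, d i = 0 ∨ d i = 1) :
    ∑ i, (star (w i) ⬝ᵥ (G *ᵥ w i)).re ≤ G.trace.re := by
  set W : Matrix n n ℂ := Matrix.of fun j i => w i j with hW
  have hWW : Wᴴ * W = diagonal d := by
    ext i j
    have : (Wᴴ * W) i j = star (w i) ⬝ᵥ w j := by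
      simp [mul_apply, conjTranspose_apply, dotProduct, hW, mul_comm]
    rw [this, hww i j, diagonal_apply]
  have hWd : W * diagonal d = W := by
    ext j i
    rw [mul_diagonal]
    rcases hd i with h0 | h1
    · rw [h0, mul_zero, hW]
      simp [hw0 i h0]
    · rw [h1, mul_one]
  set P := W * Wᴴ with hP
  have hP2 : P * P = P := by
    rw [hP, Matrix.mul_assoc, ← Matrix.mul_assoc Wᴴ W Wᴴ, hWW, ← Matrix.mul_assoc, hWd]
  have hPH : Pᴴ = P := by rw [hP, conjTranspose_mul, conjTranspose_conjTranspose]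
  have h1P : (1 - P).PosSemidef := by
    have h := Matrix.posSemidef_conjTranspose_mul_self (1 - P)
    have : (1 - P)ᴴ * (1 - P) = 1 - P := by
      rw [conjTranspose_sub, conjTranspose_one, hPH, Matrix.mul_sub, Matrix.sub_mul,
        Matrix.sub_mul, hP2]
      simp only [Matrix.one_mul, Matrix.mul_one]
      abel
    rwa [this] at h
  have hsum : ∑ i, (star (w i) ⬝ᵥ (G *ᵥ w i)) = (Wᴴ * G * W).trace := by
    rw [Matrix.trace]
    refine Finset.sum_congr rfl fun i _ => ?_
    have := conj_diag_apply W G i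
    rw [Matrix.diag]
    rw [this]
    rfl
  have htr : (Wᴴ * G * W).trace = (P * G).trace := by
    rw [trace_mul_cycle, ← hP]
  have hfin : 0 ≤ ((1 - P) * G).trace.re := trace_mul_re_nonneg h1P hG
  have hsplit : ((1 - P) * G).trace = G.trace - (P * G).trace := by
    rw [Matrix.sub_mul, Matrix.one_mul, trace_sub]
  rw [← Complex.re_sum, hsum, htr]
  rw [hsplit] at hfin
  simp only [Complex.sub_re] at hfin
  linarith

/-- Monotonicity of fidelity under a two-outcome POVM. -/
lemma fidelity_le_two_povm {ρ σ E F : Matrix n n ℂ} (hρ : ρ.PosSemidef) (hσ : σ.PosSemidef)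
    (hE : E.PosSemidef) (hF : F.PosSemidef) (hEF : E + F = 1) :
    traceNorm (hρ.sqrt * hσ.sqrt) ≤
      Real.sqrt ((E * ρ).trace.re * (E * σ).trace.re)
        + Real.sqrt ((F * ρ).trace.re * (F * σ).trace.re) := by
  set M := hρ.sqrt * hσ.sqrt with hM
  have h := Matrix.posSemidef_conjTranspose_mul_self M
  set e := h.1.eigenvalues with he
  set v : n → n → ℂ := fun i => ⇑(h.1.eigenvectorBasis i) with hv
  set s : n → ℝ := fun i => Real.sqrt (e i) with hs
  have hes : ∀ i, e i = s i ^ 2 := fun i => (Real.sq_sqrt (h.eigenvalues_nonneg i)).symm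
  set w : n → n → ℂ := fun i => if s i = 0 then 0 else (((s i) : ℂ))⁻¹ • (M *ᵥ v i) with hw
  set d : n → ℂ := fun i => if s i = 0 then 0 else 1 with hd
  have hMvMv : ∀ i j, star (M *ᵥ v i) ⬝ᵥ (M *ᵥ v j) = if i = j then (e i : ℂ) else 0 := by
    intro i j
    rw [dot_mulVec_mulVec, h.1.mulVec_eigenvectorBasis, dotProduct_smul, hv]
    rw [eig_dot h.1 i j]
    by_cases hij : i = j
    · subst hij; simp [Complex.real_smul]; rfl
    · simp [hij]
  have hMv : ∀ i, M *ᵥ v i = ((s i : ℝ) : ℂ) • w i := by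
    intro i
    by_cases h0 : s i = 0
    · have : star (M *ᵥ v i) ⬝ᵥ (M *ᵥ v i) = 0 := by
        rw [hMvMv i i, if_pos rfl, hes i, h0]
        norm_num
      rw [dotProduct_star_self_eq_zero] at this
      rw [this, h0]
      simp
    · rw [hw]
      simp only [h0, if_neg, ite_false]
      rw [smul_smul, mul_inv_cancel₀ (by exact_mod_cast h0), one_smul]
  have hww : ∀ i j, star (w i) ⬝ᵥ w j = if i = j then d i else 0 := by
    intro i j
    by_cases h0 : s i = 0
    · rw [hw, hd]
      simp [h0]
    · by_cases h1 : s j = 0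
      · have hij : i ≠ j := fun hh => h0 (hh ▸ h1)
        rw [hw, hd]
        simp [h0, h1, hij]
      · rw [hw, hd]
        simp only [h0, h1, ite_false]
        rw [star_smul, smul_dotProduct, dotProduct_smul, hMvMv i j]
        by_cases hij : i = j
        · subst hij
          simp only [if_pos rfl]
          rw [hes i]
          rw [star_inv₀]
          rw [RCLike.star_def, Complex.conj_ofReal]
          rw [smul_eq_mul, smul_eq_mul]
          push_cast
          field_simp
        · simp [hij]
  have hw0 : ∀ i, d i = 0 → w i = 0 := by
    intro i hi
    rw [hd] at hi
    by_cases h0 : s i = 0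
    · rw [hw]; simp [h0]
    · simp [h0] at hi
  have hdval : ∀ i, d i = 0 ∨ d i = 1 := by
    intro i; rw [hd]; by_cases h0 : s i = 0 <;> simp [h0]
  -- key bound for a single POVM element
  have key : ∀ (E : Matrix n n ℂ), E.PosSemidef →
      (∑ i, (star (w i) ⬝ᵥ ((hρ.sqrt * E * hσ.sqrt) *ᵥ v i)).re) ≤
        Real.sqrt ((E * ρ).trace.re) * Real.sqrt ((E * σ).trace.re) := by
    intro E hE
    set A := hE.sqrt * hρ.sqrt with hA
    set B := hE.sqrt * hσ.sqrt with hB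
    have hAH : Aᴴ = hρ.sqrt * hE.sqrt := by
      rw [hA, conjTranspose_mul, hρ.posSemidef_sqrt.isHermitian.eq,
        hE.posSemidef_sqrt.isHermitian.eq]
    have hBH : Bᴴ = hσ.sqrt * hE.sqrt := by
      rw [hB, conjTranspose_mul, hσ.posSemidef_sqrt.isHermitian.eq,
        hE.posSemidef_sqrt.isHermitian.eq]
    have hN : hρ.sqrt * E * hσ.sqrt = Aᴴ * B := by
      rw [hAH, hB, Matrix.mul_assoc hρ.sqrt hE.sqrt (hE.sqrt * hσ.sqrt),
        ← Matrix.mul_assoc hE.sqrt hE.sqrt hσ.sqrt, hE.sqrt_mul_self, ← Matrix.mul_assoc]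
    have hAA : Aᴴ * A = hρ.sqrt * E * hρ.sqrt := by
      rw [hAH, hA, Matrix.mul_assoc, ← Matrix.mul_assoc hE.sqrt hE.sqrt hρ.sqrt,
        hE.sqrt_mul_self, ← Matrix.mul_assoc]
    have hBB : Bᴴ * B = hσ.sqrt * E * hσ.sqrt := by
      rw [hBH, hB, Matrix.mul_assoc, ← Matrix.mul_assoc hE.sqrt hE.sqrt hσ.sqrt,
        hE.sqrt_mul_self, ← Matrix.mul_assoc]
    have htrA : (Aᴴ * A).trace = (E * ρ).trace := by
      rw [hAA, trace_mul_cycle, hρ.sqrt_mul_self, trace_mul_comm]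
    have htrB : (Bᴴ * B).trace = (E * σ).trace := by
      rw [hBB, trace_mul_cycle, hσ.sqrt_mul_self, trace_mul_comm]
    have step1 : ∀ i, (star (w i) ⬝ᵥ ((hρ.sqrt * E * hσ.sqrt) *ᵥ v i)).re ≤
        Real.sqrt (star (A *ᵥ w i) ⬝ᵥ (A *ᵥ w i)).re
          * Real.sqrt (star (B *ᵥ v i) ⬝ᵥ (B *ᵥ v i)).re := by
      intro i
      rw [hN, ← dot_mulVec_mulVec]
      calc (star (A *ᵥ w i) ⬝ᵥ (B *ᵥ v i)).re
          ≤ ‖star (A *ᵥ w i) ⬝ᵥ (B *ᵥ v i)‖ := by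
            exact Complex.re_le_norm _
        _ ≤ _ := abs_dotProduct_le _ _
    have sumA : ∑ i, (star (A *ᵥ w i) ⬝ᵥ (A *ᵥ w i)).re ≤ (E * ρ).trace.re := by
      have hG : (Aᴴ * A).PosSemidef := Matrix.posSemidef_conjTranspose_mul_self A
      have := sum_dot_le_trace hG w d hw0 hww hdval
      calc ∑ i, (star (A *ᵥ w i) ⬝ᵥ (A *ᵥ w i)).re
          = ∑ i, ((star (w i)) ⬝ᵥ ((Aᴴ * A) *ᵥ w i)).re := by
            refine Finset.sum_congr rfl fun i _ => ?_
            rw [dot_mulVec_mulVec]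
        _ ≤ (Aᴴ * A).trace.re := this
        _ = (E * ρ).trace.re := by rw [htrA]
    have sumB : ∑ i, (star (B *ᵥ v i) ⬝ᵥ (B *ᵥ v i)).re = (E * σ).trace.re := by
      have := sum_dot_eq_trace h.1.eigenvectorUnitary (Bᴴ * B)
      have hcol : ∀ i, (fun j => ((h.1.eigenvectorUnitary : Matrix n n ℂ)) j i) = v i :=
        fun i => funext fun j => h.1.eigenvectorUnitary_apply j i
      calc ∑ i, (star (B *ᵥ v i) ⬝ᵥ (B *ᵥ v i)).re
          = ∑ i, ((star (v i)) ⬝ᵥ ((Bᴴ * B) *ᵥ v i)).re := by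
            refine Finset.sum_congr rfl fun i _ => ?_
            rw [dot_mulVec_mulVec]
        _ = (E * σ).trace.re := by
            rw [← Complex.re_sum]
            have hL : (∑ i, star (v i) ⬝ᵥ ((Bᴴ * B) *ᵥ v i)) = (Bᴴ * B).trace := by
              simp_rw [← hcol]
              exact this
            rw [hL, htrB]
    calc (∑ i, (star (w i) ⬝ᵥ ((hρ.sqrt * E * hσ.sqrt) *ᵥ v i)).re)
        ≤ ∑ i, Real.sqrt (star (A *ᵥ w i) ⬝ᵥ (A *ᵥ w i)).re
            * Real.sqrt (star (B *ᵥ v i) ⬝ᵥ (B *ᵥ v i)).re :=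
          Finset.sum_le_sum fun i _ => step1 i
      _ ≤ Real.sqrt (∑ i, (star (A *ᵥ w i) ⬝ᵥ (A *ᵥ w i)).re)
            * Real.sqrt (∑ i, (star (B *ᵥ v i) ⬝ᵥ (B *ᵥ v i)).re) :=
          Real.sum_sqrt_mul_sqrt_le _ (fun i => nsq_nonneg _) (fun i => nsq_nonneg _)
      _ ≤ _ := by
          rw [sumB]
          exact mul_le_mul_of_nonneg_right (Real.sqrt_le_sqrt sumA) (Real.sqrt_nonneg _)
  -- assemble
  have hterm : ∀ i, (star (w i) ⬝ᵥ (M *ᵥ v i)).re = s i := by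
    intro i
    rw [hMv i, dotProduct_smul, hww i i, if_pos rfl]
    simp only [hd]
    by_cases h0 : s i = 0
    · rw [if_pos h0, smul_zero, Complex.zero_re, h0]
    · rw [if_neg h0, smul_eq_mul, mul_one, Complex.ofReal_re]
  have hTN : traceNorm M = ∑ i, (star (w i) ⬝ᵥ (M *ᵥ v i)).re := by
    rw [traceNorm_eq_sum]
    exact Finset.sum_congr rfl fun i _ => (hterm i).symm
  have hsplitM : ∀ i, M *ᵥ v i = (hρ.sqrt * E * hσ.sqrt) *ᵥ v i + (hρ.sqrt * F * hσ.sqrt) *ᵥ v i := by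
    intro i
    rw [← add_mulVec]
    congr 1
    rw [← Matrix.add_mul, ← Matrix.mul_add, hEF, Matrix.mul_one]
  rw [hTN]
  calc ∑ i, (star (w i) ⬝ᵥ (M *ᵥ v i)).re
      = ∑ i, ((star (w i) ⬝ᵥ ((hρ.sqrt * E * hσ.sqrt) *ᵥ v i)).re
          + (star (w i) ⬝ᵥ ((hρ.sqrt * F * hσ.sqrt) *ᵥ v i)).re) := by
        refine Finset.sum_congr rfl fun i _ => ?_
        rw [hsplitM i, dotProduct_add, Complex.add_re]
    _ = (∑ i, (star (w i) ⬝ᵥ ((hρ.sqrt * E * hσ.sqrt) *ᵥ v i)).re)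
          + ∑ i, (star (w i) ⬝ᵥ ((hρ.sqrt * F * hσ.sqrt) *ᵥ v i)).re :=
        Finset.sum_add_distrib
    _ ≤ _ := by
        have k1 := key E hE
        have k2 := key F hF
        have hsq1 : Real.sqrt ((E * ρ).trace.re * (E * σ).trace.re)
            = Real.sqrt ((E * ρ).trace.re) * Real.sqrt ((E * σ).trace.re) :=
          Real.sqrt_mul (trace_mul_re_nonneg hE hρ) _
        have hsq2 : Real.sqrt ((F * ρ).trace.re * (F * σ).trace.re)
            = Real.sqrt ((F * ρ).trace.re) * Real.sqrt ((F * σ).trace.re) :=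
          Real.sqrt_mul (trace_mul_re_nonneg hF hρ) _
        rw [hsq1, hsq2]
        exact add_le_add k1 k2
section cdiag

/-- conjugation of a diagonal matrix by a fixed matrix `V`. -/
noncomputable def cdiag (V : Matrix n n ℂ) (f : n → ℂ) : Matrix n n ℂ :=
  V * diagonal f * star V

variable {V : Matrix n n ℂ} (hV : V ∈ Matrix.unitaryGroup n ℂ)

lemma umem_star_mul (hV : V ∈ Matrix.unitaryGroup n ℂ) : star V * V = 1 :=
  (Unitary.mem_iff.mp hV).1

lemma umem_mul_star (hV : V ∈ Matrix.unitaryGroup n ℂ) : V * star V = 1 :=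
  (Unitary.mem_iff.mp hV).2

include hV in
lemma cdiag_mul (f g : n → ℂ) :
    cdiag V f * cdiag V g = cdiag V (fun i => f i * g i) := by
  unfold cdiag
  simp only [Matrix.mul_assoc]
  rw [← Matrix.mul_assoc (star V) V _, umem_star_mul hV, Matrix.one_mul,
    ← Matrix.mul_assoc (diagonal f) (diagonal g) _, diagonal_mul_diagonal]

include hV in
lemma cdiag_trace (f : n → ℂ) : (cdiag V f).trace = ∑ i, f i :=
  trace_unitary_conj ⟨V, hV⟩ f

lemma cdiag_conjTranspose (f : n → ℂ) : (cdiag V f)ᴴ = cdiag V (fun i => star (f i)) := by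
  unfold cdiag
  rw [conjTranspose_mul, conjTranspose_mul, diagonal_conjTranspose,
    ← Matrix.star_eq_conjTranspose, ← Matrix.star_eq_conjTranspose, star_star,
    Matrix.mul_assoc]
  rfl

lemma cdiag_psd (f : n → ℝ) (hf : ∀ i, 0 ≤ f i) :
    (cdiag V (fun i => ((f i : ℝ) : ℂ))).PosSemidef := by
  have hdiag : (diagonal (fun i => ((f i : ℝ) : ℂ))).PosSemidef := by
    refine posSemidef_diagonal_iff.mpr fun i => ?_
    rw [Complex.le_def]
    constructor <;> simp [hf i]
  have := hdiag.mul_mul_conjTranspose_same V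
  unfold cdiag
  rwa [← Matrix.star_eq_conjTranspose] at this

include hV in
lemma cdiag_one : cdiag V (fun _ => (1 : ℂ)) = 1 := by
  unfold cdiag
  have : diagonal (fun _ : n => (1 : ℂ)) = 1 := diagonal_one
  rw [this, Matrix.mul_one, umem_mul_star hV]

lemma cdiag_sub (f g : n → ℂ) : cdiag V f - cdiag V g = cdiag V (fun i => f i - g i) := by
  unfold cdiag
  rw [← Matrix.sub_mul, ← Matrix.mul_sub, ← diagonal_sub]

lemma cdiag_add (f g : n → ℂ) : cdiag V f + cdiag V g = cdiag V (fun i => f i + g i) := by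
  unfold cdiag
  rw [← Matrix.add_mul, ← Matrix.mul_add, ← diagonal_add]

include hV in
lemma cdiag_unitary_mem (u : n → ℂ) (hu : ∀ i, star (u i) * u i = 1) :
    cdiag V u ∈ Matrix.unitaryGroup n ℂ := by
  have h1 : star (cdiag V u) * cdiag V u = 1 := by
    rw [Matrix.star_eq_conjTranspose, cdiag_conjTranspose, cdiag_mul hV]
    have : (fun i => star (u i) * u i) = fun _ => (1 : ℂ) := funext fun i => hu i
    rw [this, cdiag_one hV]
  exact Unitary.mem_iff.mpr ⟨h1, mul_eq_one_comm.mp h1⟩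

lemma cdiag_spectral {C : Matrix n n ℂ} (hC : C.IsHermitian) :
    C = cdiag (hC.eigenvectorUnitary : Matrix n n ℂ)
      (fun i => ((hC.eigenvalues i : ℝ) : ℂ)) := by
  have h := hC.spectral_theorem
  rw [Unitary.conjStarAlgAut_apply] at h
  exact h

end cdiag

lemma traceNorm_hermitian {X : Matrix n n ℂ} (hX : X.IsHermitian) :
    traceNorm X = ∑ i, |hX.eigenvalues i| := by
  set V : Matrix n n ℂ := (hX.eigenvectorUnitary : Matrix n n ℂ) with hVdef
  have hV : V ∈ Matrix.unitaryGroup n ℂ := hX.eigenvectorUnitary.2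
  set d := hX.eigenvalues with hd
  have hXc : cdiag V (fun i => ((d i : ℝ) : ℂ)) = X := (cdiag_spectral hX).symm
  have hS : (cdiag V (fun i => ((|d i| : ℝ) : ℂ))).PosSemidef :=
    cdiag_psd _ (fun i => abs_nonneg _)
  have hsq : (cdiag V (fun i => ((|d i| : ℝ) : ℂ))) ^ 2 = Xᴴ * X := by
    have h1 : (cdiag V (fun i => ((|d i| : ℝ) : ℂ))) ^ 2
        = cdiag V (fun i => ((d i : ℝ) : ℂ)) * cdiag V (fun i => ((d i : ℝ) : ℂ)) := by
      rw [pow_two, cdiag_mul hV, cdiag_mul hV]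
      have hfun : (fun i => ((|d i| : ℝ) : ℂ) * ((|d i| : ℝ) : ℂ))
          = fun i => ((d i : ℝ) : ℂ) * ((d i : ℝ) : ℂ) := by
        funext i
        rw [← Complex.ofReal_mul, ← Complex.ofReal_mul, abs_mul_abs_self]
      rw [hfun]
    rw [h1, hXc, hX.eq]
  have heq := hS.eq_sqrt_of_sq_eq (Matrix.posSemidef_conjTranspose_mul_self X) hsq
  show ((Matrix.posSemidef_conjTranspose_mul_self X).sqrt).trace.re = _
  rw [← heq, cdiag_trace hV, Complex.re_sum]
  exact Finset.sum_congr rfl fun i _ => by simp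

/-- Powers–Størmer inequality. -/
lemma powers_stormer {A B : Matrix n n ℂ} (hA : A.PosSemidef) (hB : B.PosSemidef) :
    (((A - B) * (A - B)).trace).re ≤ traceNorm (A * A - B * B) := by
  have hC : (A - B).IsHermitian := hA.isHermitian.sub hB.isHermitian
  set V : Matrix n n ℂ := (hC.eigenvectorUnitary : Matrix n n ℂ) with hVdef
  have hV : V ∈ Matrix.unitaryGroup n ℂ := hC.eigenvectorUnitary.2
  set d := hC.eigenvalues with hd
  set u : n → ℂ := fun i => if d i < 0 then (-1 : ℂ) else 1 with hu
  have humod : ∀ i, star (u i) * u i = 1 := by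
    intro i
    rw [hu]
    by_cases h : d i < 0 <;> simp [h]
  have hWmem : cdiag V u ∈ Matrix.unitaryGroup n ℂ := cdiag_unitary_mem hV u humod
  set W := cdiag V u with hW
  set Cabs := cdiag V (fun i => ((|d i| : ℝ) : ℂ)) with hCabs
  set Cp := cdiag V (fun i => ((max (d i) 0 : ℝ) : ℂ)) with hCp
  set Cm := cdiag V (fun i => ((max (-(d i)) 0 : ℝ) : ℂ)) with hCm
  have hCspec : A - B = cdiag V (fun i => ((d i : ℝ) : ℂ)) := cdiag_spectral hC
  have hWC : W * (A - B) = Cabs := by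
    rw [hCspec, hW, hCabs, cdiag_mul hV]
    have hfun : (fun i => u i * ((d i : ℝ) : ℂ)) = fun i => ((|d i| : ℝ) : ℂ) := by
      funext i
      simp only [hu]
      by_cases h : d i < 0
      · rw [if_pos h, abs_of_neg h]
        push_cast
        ring
      · rw [if_neg h, abs_of_nonneg (not_lt.mp h), one_mul]
    rw [hfun]
  have hCW : (A - B) * W = Cabs := by
    rw [hCspec, hW, hCabs, cdiag_mul hV]
    have hfun : (fun i => ((d i : ℝ) : ℂ) * u i) = fun i => ((|d i| : ℝ) : ℂ) := by
      funext i
      simp only [hu]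
      by_cases h : d i < 0
      · rw [if_pos h, abs_of_neg h]
        push_cast
        ring
      · rw [if_neg h, abs_of_nonneg (not_lt.mp h), mul_one]
    rw [hfun]
  have hCpm_add : Cp + Cm = Cabs := by
    rw [hCp, hCm, hCabs, cdiag_add]
    have hfun : (fun i => ((max (d i) 0 : ℝ) : ℂ) + ((max (-(d i)) 0 : ℝ) : ℂ))
        = fun i => ((|d i| : ℝ) : ℂ) := by
      funext i
      rw [← Complex.ofReal_add]
      congr 1
      rcases le_or_gt (d i) 0 with h | h
      · rw [max_eq_right h, max_eq_left (by linarith), abs_of_nonpos h, zero_add]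
      · rw [max_eq_left h.le, max_eq_right (by linarith), abs_of_pos h, add_zero]
    rw [hfun]
  have hCpm_sub : Cp - Cm = A - B := by
    rw [hCp, hCm, cdiag_sub, hCspec]
    have hfun : (fun i => ((max (d i) 0 : ℝ) : ℂ) - ((max (-(d i)) 0 : ℝ) : ℂ))
        = fun i => ((d i : ℝ) : ℂ) := by
      funext i
      rw [← Complex.ofReal_sub]
      congr 1
      rcases le_or_gt (d i) 0 with h | h
      · rw [max_eq_right h, max_eq_left (by linarith)]
        linarith
      · rw [max_eq_left h.le, max_eq_right (by linarith)]
        linarith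
    rw [hfun]
  have hCpP : Cp.PosSemidef := cdiag_psd _ (fun i => le_max_right _ _)
  have hCmP : Cm.PosSemidef := cdiag_psd _ (fun i => le_max_right _ _)
  have hid : (A * A - B * B) + (A * A - B * B)
      = (A - B) * (A + B) + (A + B) * (A - B) := by noncomm_ring
  have hL1 : (W * (A * A - B * B)).trace.re ≤ traceNorm (A * A - B * B) :=
    re_trace_unitary_mul_le ⟨W, hWmem⟩ (A * A - B * B)
  have htr : (W * (A * A - B * B)).trace + (W * (A * A - B * B)).trace
      = (Cabs * (A + B)).trace + (Cabs * (A + B)).trace := by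
    rw [← trace_add, ← Matrix.mul_add, hid, Matrix.mul_add, trace_add]
    congr 1
    · rw [← Matrix.mul_assoc, hWC]
    · rw [← Matrix.mul_assoc, trace_mul_cycle, hCW]
  have htrW : (W * (A * A - B * B)).trace.re = (Cabs * (A + B)).trace.re := by
    have h := congrArg Complex.re htr
    simp only [Complex.add_re] at h
    linarith
  have hexp : Cabs * (A + B) = (Cp - Cm) * (A - B) + (Cp * B + Cp * B + (Cm * A + Cm * A)) := by
    rw [← hCpm_add]
    noncomm_ring
  rw [hCpm_sub] at hexp
  have hge : ((A - B) * (A - B)).trace.re ≤ (Cabs * (A + B)).trace.re := by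
    have h1 : 0 ≤ (Cp * B).trace.re := trace_mul_re_nonneg hCpP hB
    have h2 : 0 ≤ (Cm * A).trace.re := trace_mul_re_nonneg hCmP hA
    rw [hexp]
    simp only [trace_add, Complex.add_re]
    linarith
  calc ((A - B) * (A - B)).trace.re ≤ (Cabs * (A + B)).trace.re := hge
    _ = (W * (A * A - B * B)).trace.re := htrW.symm
    _ ≤ traceNorm (A * A - B * B) := hL1
lemma trace_dist_pq {ρ σ : Matrix n n ℂ} (hρ : ρ.PosSemidef) (hσ : σ.PosSemidef)
    (hρtr : ρ.trace = 1) (hσtr : σ.trace = 1) :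
    ∃ P : Matrix n n ℂ, P.PosSemidef ∧ (1 - P).PosSemidef ∧
      (P * ρ).trace.re - (P * σ).trace.re = traceNorm (ρ - σ) / 2 := by
  have hC : (ρ - σ).IsHermitian := hρ.isHermitian.sub hσ.isHermitian
  set V : Matrix n n ℂ := (hC.eigenvectorUnitary : Matrix n n ℂ) with hVdef
  have hV : V ∈ Matrix.unitaryGroup n ℂ := hC.eigenvectorUnitary.2
  set d := hC.eigenvalues with hd
  have hCspec : ρ - σ = cdiag V (fun i => ((d i : ℝ) : ℂ)) := cdiag_spectral hC
  have hsum0 : ∑ i, d i = 0 := by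
    have h1 : (ρ - σ).trace = 0 := by rw [trace_sub, hρtr, hσtr, sub_self]
    rw [hCspec, cdiag_trace hV] at h1
    have h2 : ((∑ i, d i : ℝ) : ℂ) = 0 := by push_cast; exact h1
    exact_mod_cast h2
  have hTN : traceNorm (ρ - σ) = ∑ i, |d i| := traceNorm_hermitian hC
  set g : n → ℝ := fun i => if 0 < d i then 1 else 0 with hg
  have hg0 : ∀ i, 0 ≤ g i := by
    intro i
    rw [hg]
    by_cases h : 0 < d i <;> simp [h]
  have hg1 : ∀ i, g i ≤ 1 := by
    intro i
    rw [hg]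
    by_cases h : 0 < d i <;> simp [h]
  refine ⟨cdiag V (fun i => ((g i : ℝ) : ℂ)), cdiag_psd _ hg0, ?_, ?_⟩
  · have hone : (1 : Matrix n n ℂ) = cdiag V (fun _ => (1 : ℂ)) := (cdiag_one hV).symm
    have hsub : (1 : Matrix n n ℂ) - cdiag V (fun i => ((g i : ℝ) : ℂ))
        = cdiag V (fun i => (((1 - g i : ℝ)) : ℂ)) := by
      rw [hone, cdiag_sub]
      have hfun : (fun i => (1 : ℂ) - ((g i : ℝ) : ℂ)) = fun i => (((1 - g i : ℝ)) : ℂ) := by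
        funext i
        push_cast
        ring
      rw [hfun]
    rw [hsub]
    exact cdiag_psd _ (fun i => by linarith [hg1 i])
  · have hPmul : cdiag V (fun i => ((g i : ℝ) : ℂ)) * (ρ - σ)
        = cdiag V (fun i => ((g i : ℝ) : ℂ) * ((d i : ℝ) : ℂ)) := by
      rw [hCspec, cdiag_mul hV]
    have hstep : (cdiag V (fun i => ((g i : ℝ) : ℂ)) * (ρ - σ)).trace.re
        = ∑ i, g i * d i := by
      rw [hPmul, cdiag_trace hV, Complex.re_sum]
      refine Finset.sum_congr rfl fun i _ => ?_
      rw [← Complex.ofReal_mul, Complex.ofReal_re]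
    have hgd : ∑ i, g i * d i = (∑ i, |d i|) / 2 := by
      have hpt : ∀ i, g i * d i = (|d i| + d i) / 2 := by
        intro i
        simp only [hg]
        by_cases h : 0 < d i
        · rw [if_pos h, abs_of_pos h]
          ring
        · rw [if_neg h, abs_of_nonpos (not_lt.mp h)]
          ring
      rw [Finset.sum_congr rfl fun i _ => hpt i]
      rw [← Finset.sum_div, Finset.sum_add_distrib, hsum0, add_zero]
    have hdistrib : cdiag V (fun i => ((g i : ℝ) : ℂ)) * (ρ - σ)
        = cdiag V (fun i => ((g i : ℝ) : ℂ)) * ρ - cdiag V (fun i => ((g i : ℝ) : ℂ)) * σ :=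
      Matrix.mul_sub _ _ _
    have := hstep
    rw [hdistrib, trace_sub, Complex.sub_re] at this
    rw [this, hgd, hTN]

end FvdG

open FvdG


set_option maxHeartbeats 1600000 in
/-- Fuchs–van de Graaf and Bures–trace relations: with fidelity
`F(ρ,σ) = ‖√ρ √σ‖₁`, trace distance `Δ = ‖ρ−σ‖₁/2` and Bures metric
`Δ_B = √(1 − F)`, one has `1 − F ≤ Δ ≤ √(1 − F²)` and
`Δ_B² ≤ Δ ≤ √2 · Δ_B`. -/
theorem fuchs_van_de_graaf {n : Type*} [Fintype n] [DecidableEq n]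
    (ρ σ : Matrix n n ℂ)
    (hρ : ρ.PosSemidef) (hρtr : ρ.trace = 1)
    (hσ : σ.PosSemidef) (hσtr : σ.trace = 1) :
    1 - traceNorm (hρ.sqrt * hσ.sqrt) ≤ traceNorm (ρ - σ) / 2 ∧
    traceNorm (ρ - σ) / 2 ≤ Real.sqrt (1 - traceNorm (hρ.sqrt * hσ.sqrt) ^ 2) ∧
    Real.sqrt (1 - traceNorm (hρ.sqrt * hσ.sqrt)) ^ 2 ≤ traceNorm (ρ - σ) / 2 ∧
    traceNorm (ρ - σ) / 2 ≤
      Real.sqrt 2 * Real.sqrt (1 - traceNorm (hρ.sqrt * hσ.sqrt)) := by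
  set F := traceNorm (hρ.sqrt * hσ.sqrt) with hF
  set D := traceNorm (ρ - σ) with hD
  have hF0 : 0 ≤ F := traceNorm_nonneg _
  have hD0 : 0 ≤ D := traceNorm_nonneg _
  -- trace of the cross term is at most F
  have hcross : ((hρ.sqrt * hσ.sqrt).trace).re ≤ F := by
    have h := re_trace_unitary_mul_le (1 : Matrix.unitaryGroup n ℂ) (hρ.sqrt * hσ.sqrt)
    simpa using h
  -- Powers-Stormer: 2 - 2F ≤ D
  have hlow : 2 - 2 * F ≤ D := by
    have hPS := powers_stormer hρ.posSemidef_sqrt hσ.posSemidef_sqrt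
    rw [hρ.sqrt_mul_self, hσ.sqrt_mul_self] at hPS
    have hexp : (hρ.sqrt - hσ.sqrt) * (hρ.sqrt - hσ.sqrt)
        = hρ.sqrt * hρ.sqrt + hσ.sqrt * hσ.sqrt
          - (hρ.sqrt * hσ.sqrt + hσ.sqrt * hρ.sqrt) := by noncomm_ring
    rw [hexp, hρ.sqrt_mul_self, hσ.sqrt_mul_self] at hPS
    have htr : (ρ + σ - (hρ.sqrt * hσ.sqrt + hσ.sqrt * hρ.sqrt)).trace
        = 2 - ((hρ.sqrt * hσ.sqrt).trace + (hρ.sqrt * hσ.sqrt).trace) := by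
      rw [trace_sub, trace_add, trace_add, hρtr, hσtr,
        trace_mul_comm hσ.sqrt hρ.sqrt]
      norm_num
    rw [htr] at hPS
    have : (2 - ((hρ.sqrt * hσ.sqrt).trace + (hρ.sqrt * hσ.sqrt).trace)).re
        = 2 - 2 * ((hρ.sqrt * hσ.sqrt).trace).re := by
      simp only [Complex.sub_re, Complex.add_re]
      norm_num
      ring
    rw [this] at hPS
    linarith
  -- F ≤ 1
  have hF1 : F ≤ 1 := by
    have h := fidelity_le_two_povm hρ hσ (Matrix.PosSemidef.one) (Matrix.PosSemidef.zero)
      (by rw [add_zero])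
    rw [Matrix.one_mul, Matrix.one_mul, Matrix.zero_mul, trace_zero, hρtr, hσtr] at h
    simpa using h
  -- the measurement probabilities
  obtain ⟨P, hPpsd, h1Ppsd, hpq⟩ := trace_dist_pq hρ hσ hρtr hσtr
  set p := (P * ρ).trace.re with hp
  set q := (P * σ).trace.re with hq
  have hp0 : 0 ≤ p := trace_mul_re_nonneg hPpsd hρ
  have hq0 : 0 ≤ q := trace_mul_re_nonneg hPpsd hσ
  have e1 : ((1 - P) * ρ).trace.re = 1 - p := by
    rw [Matrix.sub_mul, Matrix.one_mul, trace_sub, Complex.sub_re, hρtr]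
    simp [hp]
  have e2 : ((1 - P) * σ).trace.re = 1 - q := by
    rw [Matrix.sub_mul, Matrix.one_mul, trace_sub, Complex.sub_re, hσtr]
    simp [hq]
  have hp1 : p ≤ 1 := by
    have h := trace_mul_re_nonneg h1Ppsd hρ
    rw [e1] at h
    linarith
  have hq1 : q ≤ 1 := by
    have h := trace_mul_re_nonneg h1Ppsd hσ
    rw [e2] at h
    linarith
  have hFpq : F ≤ Real.sqrt (p * q) + Real.sqrt ((1 - p) * (1 - q)) := by
    have h := fidelity_le_two_povm hρ hσ hPpsd h1Ppsd (by abel)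
    rwa [e1, e2] at h
  -- classical bound
  have hab : Real.sqrt (p * q) * Real.sqrt ((1 - p) * (1 - q))
      = Real.sqrt (p * (1 - p)) * Real.sqrt (q * (1 - q)) := by
    rw [← Real.sqrt_mul (by positivity), ← Real.sqrt_mul (mul_nonneg hp0 (by linarith))]
    ring_nf
  have h2ab : 2 * (Real.sqrt (p * q) * Real.sqrt ((1 - p) * (1 - q)))
      ≤ p * (1 - p) + q * (1 - q) := by
    rw [hab]
    nlinarith [Real.sq_sqrt (mul_nonneg hp0 (by linarith : (0:ℝ) ≤ 1 - p)),
      Real.sq_sqrt (mul_nonneg hq0 (by linarith : (0:ℝ) ≤ 1 - q)),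
      Real.sqrt_nonneg (p * (1 - p)), Real.sqrt_nonneg (q * (1 - q)),
      sq_nonneg (Real.sqrt (p * (1 - p)) - Real.sqrt (q * (1 - q)))]
  have hs1 : Real.sqrt (p * q) ^ 2 = p * q := Real.sq_sqrt (by positivity)
  have hs2 : Real.sqrt ((1 - p) * (1 - q)) ^ 2 = (1 - p) * (1 - q) :=
    Real.sq_sqrt (mul_nonneg (by linarith) (by linarith))
  have key2 : (Real.sqrt (p * q) + Real.sqrt ((1 - p) * (1 - q))) ^ 2 ≤ 1 - (p - q) ^ 2 := by
    nlinarith [hs1, hs2, h2ab]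
  have hDsq : (D / 2) ^ 2 ≤ 1 - F ^ 2 := by
    have hFsq : F ^ 2 ≤ (Real.sqrt (p * q) + Real.sqrt ((1 - p) * (1 - q))) ^ 2 :=
      pow_le_pow_left₀ hF0 hFpq 2
    have hDpq : D / 2 = p - q := hpq.symm
    rw [hDpq]
    linarith [hFsq, key2]
  have goal2 : D / 2 ≤ Real.sqrt (1 - F ^ 2) := by
    have h := Real.sqrt_le_sqrt hDsq
    rwa [Real.sqrt_sq (by linarith : (0:ℝ) ≤ D / 2)] at h
  have goal1 : 1 - F ≤ D / 2 := by linarith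
  refine ⟨goal1, goal2, ?_, ?_⟩
  · rw [Real.sq_sqrt (by linarith : (0:ℝ) ≤ 1 - F)]
    exact goal1
  · have h24 : 1 - F ^ 2 ≤ 2 * (1 - F) := by nlinarith
    calc D / 2 ≤ Real.sqrt (1 - F ^ 2) := goal2
      _ ≤ Real.sqrt (2 * (1 - F)) := Real.sqrt_le_sqrt h24
      _ = Real.sqrt 2 * Real.sqrt (1 - F) := Real.sqrt_mul (by norm_num) _
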